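/- Let V be a finite nonempty type, w : V → V → ℕ∞ with w u v ≥ 1 for all u ≠ v, S a decidable subset of V, and Q : ℕ. Define sum_w(v) = ∑_{u : V} dist_w(v,u) and m = ⨅_{v : V} sum_w(v), and assume m < ⊤. Let w' be the median-gadget graph on V ⊕ Unit. Then ⨅_{p : V ⊕ Unit} sum_{w'}(p) = m + Q if S contains a median vertex of w (a vertex v ∈ S with sum_w(v) = m), and ⨅_{p : V ⊕ Unit} sum_{w'}(p) = m + Q + 1 otherwise. -/

import Mathlib

/-- Weight of a walk starting at `u` and visiting the vertices of `p` in order. -/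
def walkWeight {V : Type*} (w : V → V → ℕ∞) : V → List V → ℕ∞
  | _, [] => 0
  | u, x :: xs => w u x + walkWeight w x xs

/-- Shortest-path distance: infimum of weights of walks from `u` to `v`. -/
noncomputable def gdist {V : Type*} (w : V → V → ℕ∞) (u v : V) : ℕ∞ :=
  ⨅ (p : List V) (_ : (u :: p).getLast (List.cons_ne_nil u p) = v), walkWeight w u p

/-- Eccentricity of a vertex. -/
noncomputable def ecc {V : Type*} (w : V → V → ℕ∞) (v : V) : ℕ∞ :=
  ⨆ u, gdist w v u

/-- Radius. -/
noncomputable def rad {V : Type*} (w : V → V → ℕ∞) : ℕ∞ :=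
  ⨅ v, ecc w v

/-- Diameter. -/
noncomputable def diam {V : Type*} (w : V → V → ℕ∞) : ℕ∞ :=
  ⨆ v, ecc w v

/-- Total distance from `v` to all vertices. -/
noncomputable def sumDist {V : Type*} [Fintype V] (w : V → V → ℕ∞) (v : V) : ℕ∞ :=
  ∑ u : V, gdist w v u

/-- Median gadget on `V ⊕ Unit`: a dummy vertex `inr ()` with an incoming edge of weight `Q`
from every vertex of `S`, an incoming edge of weight `Q + 1` from every vertex not in `S`,
and no outgoing edges. -/
def medGadget {V : Type*} (w : V → V → ℕ∞) (S : Set V) [DecidablePred (· ∈ S)] (Q : ℕ) :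
    V ⊕ Unit → V ⊕ Unit → ℕ∞
  | Sum.inl u, Sum.inl v => w u v
  | Sum.inl s, Sum.inr _ => if s ∈ S then (Q : ℕ∞) else ((Q : ℕ∞) + 1)
  | Sum.inr _, _ => ⊤

namespace Stmt19Aux

variable {V : Type*}

lemma gdist_le {w : V → V → ℕ∞} {u v : V} (p : List V)
    (hp : (u :: p).getLast (List.cons_ne_nil u p) = v) :
    gdist w u v ≤ walkWeight w u p :=
  iInf₂_le p hp

lemma le_gdist {w : V → V → ℕ∞} {u v : V} {c : ℕ∞}
    (h : ∀ p : List V, (u :: p).getLast (List.cons_ne_nil u p) = v → c ≤ walkWeight w u p) :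
    c ≤ gdist w u v :=
  le_iInf₂ h

lemma gdist_self (w : V → V → ℕ∞) (v : V) : gdist w v v = 0 :=
  le_antisymm (gdist_le ([] : List V) rfl) zero_le

lemma one_le_walkWeight {w : V → V → ℕ∞} (hpos : ∀ u v : V, u ≠ v → 1 ≤ w u v)
    {u : V} : ∀ (p : List V) (v : V), (v :: p).getLast (List.cons_ne_nil v p) = u → u ≠ v →
    1 ≤ walkWeight w v p := by
  intro p
  induction p with
  | nil => intro v h hne; exact absurd h.symm hne
  | cons x xs ih =>
    intro v h hne
    rw [List.getLast_cons (List.cons_ne_nil x xs)] at h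
    by_cases hvx : v = x
    · subst hvx
      calc (1 : ℕ∞) ≤ walkWeight w v xs := ih v h hne
        _ ≤ w v v + walkWeight w v xs := le_add_self
    · calc (1 : ℕ∞) ≤ w v x := hpos v x hvx
        _ ≤ w v x + walkWeight w x xs := le_self_add

lemma one_le_gdist {w : V → V → ℕ∞} (hpos : ∀ u v : V, u ≠ v → 1 ≤ w u v)
    {u v : V} (hne : u ≠ v) : 1 ≤ gdist w v u :=
  le_gdist fun p hp => one_le_walkWeight hpos p v hp hne

variable {S : Set V} [DecidablePred (· ∈ S)] {Q : ℕ} {w : V → V → ℕ∞}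


lemma Q_le_exit {s : V} : (Q : ℕ∞) ≤ medGadget w S Q (Sum.inl s) (Sum.inr ()) := by
  simp only [medGadget]
  split <;> simp

lemma walkWeight_map_inl (v : V) (p : List V) :
    walkWeight (medGadget w S Q) (Sum.inl v) (p.map Sum.inl) = walkWeight w v p := by
  induction p generalizing v with
  | nil => rfl
  | cons x xs ih => simp only [List.map_cons, walkWeight, ih]; rfl

lemma exists_walk_of_gadget_walk (u : V) :
    ∀ (p : List (V ⊕ Unit)) (v : V),
      (Sum.inl v :: p).getLast (List.cons_ne_nil _ p) = Sum.inl u →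
      ∃ q : List V, (v :: q).getLast (List.cons_ne_nil v q) = u ∧
        walkWeight w v q ≤ walkWeight (medGadget w S Q) (Sum.inl v) p := by
  intro p
  induction p with
  | nil =>
    intro v hp
    have hv : v = u := by simpa using hp
    exact ⟨[], by simp [hv], by simp [walkWeight]⟩
  | cons x xs ih =>
    intro v hp
    rw [List.getLast_cons (List.cons_ne_nil x xs)] at hp
    match x with
    | Sum.inl x' =>
      obtain ⟨q, hq, hle⟩ := ih x' hp
      refine ⟨x' :: q, ?_, ?_⟩
      · rwa [List.getLast_cons (List.cons_ne_nil x' q)]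
      · show w v x' + walkWeight w x' q ≤ medGadget w S Q (Sum.inl v) (Sum.inl x') + _
        exact add_le_add le_rfl hle
    | Sum.inr () =>
      match xs, hp with
      | y :: ys, hp =>
        have htop : walkWeight (medGadget w S Q) (Sum.inl v) (Sum.inr () :: y :: ys) = ⊤ := by
          simp [walkWeight, medGadget]
        refine ⟨[u], by simp, ?_⟩
        rw [htop]; exact le_top

lemma gdist_inl_inl (v u : V) :
    gdist (medGadget w S Q) (Sum.inl v) (Sum.inl u) = gdist w v u := by
  apply le_antisymm
  · refine le_gdist fun p hp => ?_
    rw [← walkWeight_map_inl (S := S) (Q := Q) v p]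
    refine gdist_le (p.map Sum.inl) ?_
    have h := List.getLast_map (f := (Sum.inl : V → V ⊕ Unit)) (l := v :: p) (by simp)
    exact h.trans (congrArg _ hp)
  · refine le_gdist fun p hp => ?_
    obtain ⟨q, hq, hle⟩ := exists_walk_of_gadget_walk (S := S) (Q := Q) u p v hp
    exact (gdist_le q hq).trans hle

lemma gdist_inr (u : V) :
    gdist (medGadget w S Q) (Sum.inr ()) (Sum.inl u) = ⊤ := by
  rw [gdist, iInf_eq_top]
  intro p
  rw [iInf_eq_top]
  intro hp
  match p, hp with
  | y :: ys, hp => simp [walkWeight, medGadget]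

lemma Q_le_walk :
    ∀ (p : List (V ⊕ Unit)) (v : V),
      (Sum.inl v :: p).getLast (List.cons_ne_nil _ p) = Sum.inr () →
      (Q : ℕ∞) ≤ walkWeight (medGadget w S Q) (Sum.inl v) p := by
  intro p
  induction p with
  | nil => intro v hp; simp at hp
  | cons x xs ih =>
    intro v hp
    rw [List.getLast_cons (List.cons_ne_nil x xs)] at hp
    match x with
    | Sum.inl x' =>
      calc (Q : ℕ∞) ≤ walkWeight (medGadget w S Q) (Sum.inl x') xs := ih x' hp
        _ ≤ _ := le_add_self
    | Sum.inr () =>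
      calc (Q : ℕ∞) ≤ medGadget w S Q (Sum.inl v) (Sum.inr ()) := Q_le_exit
        _ ≤ _ := le_self_add

lemma Q_le_dist_inr (v : V) :
    (Q : ℕ∞) ≤ gdist (medGadget w S Q) (Sum.inl v) (Sum.inr ()) :=
  le_gdist fun p hp => Q_le_walk p v hp

lemma Q1_le_walk (hpos : ∀ u v : V, u ≠ v → 1 ≤ w u v) :
    ∀ (p : List (V ⊕ Unit)) (v : V), v ∉ S →
      (Sum.inl v :: p).getLast (List.cons_ne_nil _ p) = Sum.inr () →
      (Q : ℕ∞) + 1 ≤ walkWeight (medGadget w S Q) (Sum.inl v) p := by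
  intro p
  induction p with
  | nil => intro v hv hp; simp at hp
  | cons x xs ih =>
    intro v hv hp
    rw [List.getLast_cons (List.cons_ne_nil x xs)] at hp
    match x with
    | Sum.inl x' =>
      by_cases hvx : v = x'
      · subst hvx
        calc (Q : ℕ∞) + 1 ≤ walkWeight (medGadget w S Q) (Sum.inl v) xs := ih v hv hp
          _ ≤ _ := le_add_self
      · have h1 : 1 ≤ medGadget w S Q (Sum.inl v) (Sum.inl x') := hpos v x' hvx
        have h2 : (Q : ℕ∞) ≤ walkWeight (medGadget w S Q) (Sum.inl x') xs := Q_le_walk xs x' hp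
        calc (Q : ℕ∞) + 1 = 1 + Q := by rw [add_comm]
          _ ≤ _ := add_le_add h1 h2
    | Sum.inr () =>
      have heq : medGadget w S Q (Sum.inl v) (Sum.inr ()) = (Q : ℕ∞) + 1 := by
        simp [medGadget, hv]
      calc (Q : ℕ∞) + 1 = medGadget w S Q (Sum.inl v) (Sum.inr ()) := heq.symm
        _ ≤ _ := le_self_add

lemma Q1_le_dist_inr (hpos : ∀ u v : V, u ≠ v → 1 ≤ w u v) {v : V} (hv : v ∉ S) :
    (Q : ℕ∞) + 1 ≤ gdist (medGadget w S Q) (Sum.inl v) (Sum.inr ()) :=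
  le_gdist fun p hp => Q1_le_walk hpos p v hv hp

lemma dist_inr_le_exit (v : V) :
    gdist (medGadget w S Q) (Sum.inl v) (Sum.inr ()) ≤
      medGadget w S Q (Sum.inl v) (Sum.inr ()) := by
  have h := gdist_le (w := medGadget w S Q) ([Sum.inr ()]) (u := Sum.inl v)
    (v := Sum.inr ()) (by simp)
  simpa [walkWeight] using h

variable (S Q) in
lemma sumDist_inl [Fintype V] (v : V) :
    sumDist (medGadget w S Q) (Sum.inl v) =
      sumDist w v + gdist (medGadget w S Q) (Sum.inl v) (Sum.inr ()) := by
  rw [sumDist, Fintype.sum_sum_type]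
  simp [gdist_inl_inl, sumDist]

variable (w S Q) in
lemma sumDist_inr [Fintype V] [Nonempty V] :
    sumDist (medGadget w S Q) (Sum.inr ()) = ⊤ := by
  have a : V := Classical.arbitrary V
  refine le_antisymm le_top ?_
  calc (⊤ : ℕ∞) = gdist (medGadget w S Q) (Sum.inr ()) (Sum.inl a) := (gdist_inr a).symm
    _ ≤ _ := Finset.single_le_sum (fun _ _ => zero_le) (Finset.mem_univ _)

end Stmt19Aux

open Stmt19Aux in
theorem stmt19 {V : Type*} [Fintype V] [Nonempty V]
    (w : V → V → ℕ∞) (hpos : ∀ u v : V, u ≠ v → 1 ≤ w u v)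
    (S : Set V) [DecidablePred (· ∈ S)] (Q : ℕ)
    (hm : (⨅ v : V, sumDist w v) < ⊤) :
    ((∃ v ∈ S, sumDist w v = ⨅ v : V, sumDist w v) →
      (⨅ p : V ⊕ Unit, sumDist (medGadget w S Q) p) = (⨅ v : V, sumDist w v) + Q) ∧
    (¬ (∃ v ∈ S, sumDist w v = ⨅ v : V, sumDist w v) →
      (⨅ p : V ⊕ Unit, sumDist (medGadget w S Q) p) = (⨅ v : V, sumDist w v) + Q + 1) := by
  have hinf : (⨅ p : V ⊕ Unit, sumDist (medGadget w S Q) p)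
      = ⨅ v : V, (sumDist w v + gdist (medGadget w S Q) (Sum.inl v) (Sum.inr ())) := by
    rw [iInf_sum]
    have h2 : (⨅ j : Unit, sumDist (medGadget w S Q) (Sum.inr j)) = ⊤ := by
      rw [iInf_unique]; exact sumDist_inr (w := w) (S := S) (Q := Q)
    rw [h2, inf_top_eq]
    exact iInf_congr fun v => sumDist_inl S Q v
  obtain ⟨v0, hv0⟩ := exists_eq_ciInf_of_finite (f := fun v : V => sumDist w v)
  constructor
  · rintro ⟨v, hvS, hvm⟩
    rw [hinf]
    apply le_antisymm
    · refine iInf_le_of_le v ?_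
      have hd : gdist (medGadget w S Q) (Sum.inl v) (Sum.inr ()) ≤ (Q : ℕ∞) :=
        (dist_inr_le_exit v).trans (by simp [medGadget, hvS])
      exact add_le_add hvm.le hd
    · exact le_iInf fun u => add_le_add (iInf_le _ u) (Q_le_dist_inr u)
  · intro hnot
    rw [hinf]
    have hv0S : v0 ∉ S := fun h => hnot ⟨v0, h, hv0⟩
    apply le_antisymm
    · refine iInf_le_of_le v0 ?_
      have hd : gdist (medGadget w S Q) (Sum.inl v0) (Sum.inr ()) ≤ (Q : ℕ∞) + 1 :=
        (dist_inr_le_exit v0).trans (by simp [medGadget, hv0S])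
      calc sumDist w v0 + gdist (medGadget w S Q) (Sum.inl v0) (Sum.inr ())
          ≤ (⨅ v : V, sumDist w v) + ((Q : ℕ∞) + 1) := add_le_add hv0.le hd
        _ = (⨅ v : V, sumDist w v) + Q + 1 := (add_assoc _ _ _).symm
    · refine le_iInf fun u => ?_
      by_cases huS : u ∈ S
      · have h1 : (⨅ v : V, sumDist w v) + 1 ≤ sumDist w u := by
          rw [ENat.add_one_le_iff hm.ne]
          refine lt_of_le_of_ne (iInf_le _ u) fun h => hnot ⟨u, huS, h.symm⟩
        calc (⨅ v : V, sumDist w v) + Q + 1 = ((⨅ v : V, sumDist w v) + 1) + Q := by ring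
          _ ≤ _ := add_le_add h1 (Q_le_dist_inr u)
      · have h2 : (Q : ℕ∞) + 1 ≤ gdist (medGadget w S Q) (Sum.inl u) (Sum.inr ()) :=
          Q1_le_dist_inr hpos huS
        calc (⨅ v : V, sumDist w v) + Q + 1 = (⨅ v : V, sumDist w v) + ((Q:ℕ∞) + 1) :=
            add_assoc _ _ _
          _ ≤ _ := add_le_add (iInf_le _ u) h2
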